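/- Fix an integer n ≥ 2. For S ⊆ {1,…,n−1}, define the alternation set Alt(S) = {i ∈ {1,…,n−2} : exactly one of i and i+1 belongs to S}, and let d_n(S) denote the number of permutations π of {1,…,n} whose descent set is exactly S. Then for all S, T ⊆ {1,…,n−1}, if Alt(S) is a proper subset of Alt(T), then d_n(S) < d_n(T). -/

import Mathlib

open Finset

/-! ### Words and counts -/

def wrd (n : ℕ) (b : ℕ → Bool) (π : Equiv.Perm (Fin n)) : Prop :=
  ∀ i : ℕ, ∀ h : i + 1 < n,
    (π ⟨i + 1, h⟩ < π ⟨i, Nat.lt_of_succ_lt h⟩ ↔ b i = true)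

noncomputable def cnt (n : ℕ) (b : ℕ → Bool) : ℕ :=
  Nat.card {π : Equiv.Perm (Fin n) // wrd n b π}

noncomputable def fcard (m : ℕ) (b : ℕ → Bool) (k : ℕ) : ℕ :=
  Nat.card {π : Equiv.Perm (Fin (m+1)) // wrd (m+1) b π ∧ ((π 0 : Fin (m+1)) : ℕ) = k}

def bous : ℕ → (ℕ → Bool) → ℕ → ℕ
  | 0, _, k => if k = 0 then 1 else 0
  | (m+1), b, k =>
      if b 0 then ∑ v ∈ range (min k (m+1)), bous m (fun i => b (i+1)) v
      else ∑ v ∈ Ico k (m+1), bous m (fun i => b (i+1)) v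

lemma bous_succ (m : ℕ) (b : ℕ → Bool) (k : ℕ) :
    bous (m+1) b k = if b 0 then ∑ v ∈ range (min k (m+1)), bous m (fun i => b (i+1)) v
      else ∑ v ∈ Ico k (m+1), bous m (fun i => b (i+1)) v := rfl

/-! ### The decomposition bijection -/

def dmap {m : ℕ} (k : Fin (m+1)) (σ : Equiv.Perm (Fin m)) : Equiv.Perm (Fin (m+1)) :=
  (finSuccEquiv m).trans ((Equiv.optionCongr σ).trans (finSuccEquiv' k).symm)

lemma dmap_zero {m : ℕ} (k : Fin (m+1)) (σ : Equiv.Perm (Fin m)) : dmap k σ 0 = k := by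
  simp [dmap]

lemma dmap_succ {m : ℕ} (k : Fin (m+1)) (σ : Equiv.Perm (Fin m)) (j : Fin m) :
    dmap k σ j.succ = k.succAbove (σ j) := by
  simp [dmap]

lemma dmap_bij {m : ℕ} :
    Function.Bijective (fun p : Fin (m+1) × Equiv.Perm (Fin m) => dmap p.1 p.2) := by
  constructor
  · rintro ⟨k, σ⟩ ⟨k', σ'⟩ h
    simp only at h
    have h0 : k = k' := by
      have := congrArg (fun π : Equiv.Perm (Fin (m+1)) => π 0) h
      simpa [dmap_zero] using this
    subst h0
    have hσ : σ = σ' := by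
      apply Equiv.ext
      intro j
      have := congrArg (fun π : Equiv.Perm (Fin (m+1)) => π j.succ) h
      simp only [dmap_succ] at this
      exact Fin.succAbove_right_injective this
    rw [hσ]
  · intro π
    set k := π 0 with hk
    set e : Option (Fin m) ≃ Option (Fin m) :=
      ((finSuccEquiv m).symm.trans (π.trans (finSuccEquiv' k))) with he
    refine ⟨⟨k, e.removeNone⟩, ?_⟩
    simp only
    ext x
    cases x using Fin.cases with
    | zero => rw [dmap_zero]
    | succ j =>
      rw [dmap_succ]
      have hne : π j.succ ≠ k := by
        rw [hk]
        intro hc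
        exact Fin.succ_ne_zero j (π.injective hc)
      obtain ⟨x, hx⟩ := Fin.exists_succAbove_eq hne
      have hes : e (some j) = some x := by
        simp only [he, Equiv.trans_apply]
        rw [finSuccEquiv_symm_some, ← hx, finSuccEquiv'_succAbove]
      have := Equiv.removeNone_some e ⟨x, hes⟩
      rw [hes] at this
      have : e.removeNone j = x := Option.some_injective _ this
      rw [this, hx]

lemma succAbove_lt_left {m : ℕ} (k : Fin (m+1)) (v : Fin m) :
    k.succAbove v < k ↔ (v : ℕ) < (k : ℕ) := by
  rw [Fin.succAbove_lt_iff_castSucc_lt]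
  rw [Fin.lt_def, Fin.coe_castSucc]

lemma wrd_dmap (m : ℕ) (b : ℕ → Bool) (k : Fin (m+2)) (σ : Equiv.Perm (Fin (m+1))) :
    wrd (m+2) b (dmap k σ) ↔
      (wrd (m+1) (fun i => b (i+1)) σ ∧ (((σ 0 : Fin (m+1)) : ℕ) < (k : ℕ) ↔ b 0 = true)) := by
  constructor
  · intro h
    refine ⟨?_, ?_⟩
    · intro i hi
      have h2 := h (i+1) (by omega)
      have e1 : (⟨i+2, by omega⟩ : Fin (m+2)) = Fin.succ ⟨i+1, hi⟩ := rfl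
      have e2 : (⟨i+1, by omega⟩ : Fin (m+2)) = Fin.succ ⟨i, by omega⟩ := rfl
      rw [e1, e2, dmap_succ, dmap_succ, Fin.succAbove_lt_succAbove_iff] at h2
      exact h2
    · have h2 := h 0 (by omega)
      have e1 : (⟨1, by omega⟩ : Fin (m+2)) = Fin.succ (0 : Fin (m+1)) := rfl
      have e2 : (⟨0, by omega⟩ : Fin (m+2)) = (0 : Fin (m+2)) := rfl
      rw [e1, e2, dmap_succ, dmap_zero, succAbove_lt_left] at h2
      exact h2
  · rintro ⟨h1, h2⟩
    intro i hi
    match i with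
    | 0 =>
      have e1 : (⟨1, by omega⟩ : Fin (m+2)) = Fin.succ (0 : Fin (m+1)) := rfl
      have e2 : (⟨0, by omega⟩ : Fin (m+2)) = (0 : Fin (m+2)) := rfl
      rw [e1, e2, dmap_succ, dmap_zero, succAbove_lt_left]
      exact h2
    | (j+1) =>
      have e1 : (⟨j+2, hi⟩ : Fin (m+2)) = Fin.succ ⟨j+1, by omega⟩ := rfl
      have e2 : (⟨j+1, by omega⟩ : Fin (m+2)) = Fin.succ ⟨j, by omega⟩ := rfl
      rw [e1, e2, dmap_succ, dmap_succ, Fin.succAbove_lt_succAbove_iff]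
      exact h1 j (by omega)

/-! ### The counting recurrence -/

lemma fcard_zero (b : ℕ → Bool) : fcard 0 b 0 = 1 := by
  have e : {π : Equiv.Perm (Fin 1) // wrd 1 b π ∧ ((π 0 : Fin 1) : ℕ) = 0} ≃ Equiv.Perm (Fin 1) :=
    Equiv.subtypeUnivEquiv (fun π => ⟨fun i h => absurd h (by omega), by simp [Fin.eq_zero]⟩)
  rw [fcard, Nat.card_congr e, Nat.card_eq_fintype_card]
  simp

lemma fcard_eq_bous : ∀ (m : ℕ) (b : ℕ → Bool) (k : ℕ), k ≤ m → fcard m b k = bous m b k := by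
  intro m
  induction m with
  | zero =>
    intro b k hk
    interval_cases k
    rw [fcard_zero]
    simp [bous]
  | succ m IH =>
    intro b k hk
    classical
    -- transport along the bijection
    have e1 : {p : Fin (m+2) × Equiv.Perm (Fin (m+1)) //
        wrd (m+2) b (dmap p.1 p.2) ∧ ((dmap p.1 p.2 0 : Fin (m+2)) : ℕ) = k} ≃
        {π : Equiv.Perm (Fin (m+2)) // wrd (m+2) b π ∧ ((π 0 : Fin (m+2)) : ℕ) = k} :=
      Equiv.subtypeEquiv (Equiv.ofBijective _ dmap_bij) (fun p => Iff.rfl)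
    have e2 : {p : Fin (m+2) × Equiv.Perm (Fin (m+1)) //
        wrd (m+2) b (dmap p.1 p.2) ∧ ((dmap p.1 p.2 0 : Fin (m+2)) : ℕ) = k} ≃
        {p : Fin (m+2) × Equiv.Perm (Fin (m+1)) //
          ((p.1 : ℕ) = k ∧ (wrd (m+1) (fun i => b (i+1)) p.2 ∧
            (((p.2 0 : Fin (m+1)) : ℕ) < k ↔ b 0 = true)))} := by
      apply Equiv.subtypeEquivRight
      intro p
      rw [wrd_dmap, dmap_zero]
      constructor
      · rintro ⟨⟨h1, h2⟩, h3⟩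
        exact ⟨h3, h1, by rwa [h3] at h2⟩
      · rintro ⟨h3, h1, h2⟩
        exact ⟨⟨h1, by rwa [h3]⟩, h3⟩
    have hk2 : k < m + 2 := by omega
    have e3 : {p : Fin (m+2) × Equiv.Perm (Fin (m+1)) //
          ((p.1 : ℕ) = k ∧ (wrd (m+1) (fun i => b (i+1)) p.2 ∧
            (((p.2 0 : Fin (m+1)) : ℕ) < k ↔ b 0 = true)))} ≃
        {σ : Equiv.Perm (Fin (m+1)) // wrd (m+1) (fun i => b (i+1)) σ ∧
            (((σ 0 : Fin (m+1)) : ℕ) < k ↔ b 0 = true)} :=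
      { toFun := fun x => ⟨x.1.2, x.2.2⟩
        invFun := fun s => ⟨(⟨k, hk2⟩, s.1), rfl, s.2⟩
        left_inv := fun x => by
          apply Subtype.ext
          apply Prod.ext
          · exact Fin.ext x.2.1.symm
          · rfl
        right_inv := fun s => rfl }
    have step1 : fcard (m+1) b k =
        Nat.card {σ : Equiv.Perm (Fin (m+1)) // wrd (m+1) (fun i => b (i+1)) σ ∧
            (((σ 0 : Fin (m+1)) : ℕ) < k ↔ b 0 = true)} := by
      rw [fcard, ← Nat.card_congr e1, Nat.card_congr e2, Nat.card_congr e3]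
    -- fiberwise decomposition of the RHS
    set Q : Equiv.Perm (Fin (m+1)) → Prop := fun σ => wrd (m+1) (fun i => b (i+1)) σ ∧
            (((σ 0 : Fin (m+1)) : ℕ) < k ↔ b 0 = true) with hQ
    have step2 : Nat.card {σ // Q σ} =
        ∑ v ∈ (range (m+1)).filter (fun v => v < k ↔ b 0 = true),
          fcard m (fun i => b (i+1)) v := by
      rw [Nat.card_eq_fintype_card, Fintype.card_subtype]
      rw [Finset.card_eq_sum_card_fiberwise
        (f := fun σ : Equiv.Perm (Fin (m+1)) => ((σ 0 : Fin (m+1)) : ℕ))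
        (t := (range (m+1)).filter (fun v => v < k ↔ b 0 = true))
        (by intro σ hσ
            simp only [Finset.mem_coe, mem_filter, mem_range]
            simp only [Finset.mem_coe, mem_filter, mem_univ, true_and, hQ] at hσ
            exact ⟨(σ 0).isLt, hσ.2⟩)]
      refine Finset.sum_congr rfl (fun v hv => ?_)
      simp only [mem_filter, mem_range] at hv
      rw [fcard, Nat.card_eq_fintype_card, Fintype.card_subtype]
      congr 1
      rw [Finset.filter_filter]
      apply Finset.filter_congr
      intro σ _
      simp only [hQ]
      constructor
      · rintro ⟨⟨h1, _⟩, h3⟩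
        exact ⟨h1, h3⟩
      · rintro ⟨h1, h3⟩
        exact ⟨⟨h1, by rw [h3]; exact hv.2⟩, h3⟩
    rw [step1, step2]
    have hsum : ∀ v ∈ (range (m+1)).filter (fun v => v < k ↔ b 0 = true),
        fcard m (fun i => b (i+1)) v = bous m (fun i => b (i+1)) v := by
      intro v hv
      simp only [mem_filter, mem_range] at hv
      exact IH _ v (by omega)
    rw [Finset.sum_congr rfl hsum, bous_succ]
    by_cases hb : b 0 = true
    · rw [if_pos hb]
      apply Finset.sum_congr _ (fun _ _ => rfl)
      ext v
      simp only [mem_filter, mem_range, hb, iff_true, Nat.lt_min]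
      omega
    · rw [if_neg hb]
      apply Finset.sum_congr _ (fun _ _ => rfl)
      ext v
      simp only [mem_filter, mem_range, mem_Ico]
      have : ¬ (b 0 = true) := hb
      constructor
      · rintro ⟨h1, h2⟩
        constructor
        · by_contra hc
          exact this (h2.mp (by omega))
        · exact h1
      · rintro ⟨h1, h2⟩
        exact ⟨h2, by constructor <;> intro hh <;> [omega; exact absurd hh this]⟩

lemma cnt_eq (m : ℕ) (b : ℕ → Bool) :
    cnt (m+1) b = ∑ k ∈ range (m+1), bous m b k := by
  classical
  rw [cnt, Nat.card_eq_fintype_card, Fintype.card_subtype]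
  rw [Finset.card_eq_sum_card_fiberwise
    (f := fun π : Equiv.Perm (Fin (m+1)) => ((π 0 : Fin (m+1)) : ℕ))
    (t := range (m+1))
    (by intro π _; simp only [Finset.mem_coe, mem_range]; exact (π 0).isLt)]
  refine Finset.sum_congr rfl (fun k hk => ?_)
  simp only [mem_range] at hk
  rw [← fcard_eq_bous m b k (by omega), fcard, Nat.card_eq_fintype_card, Fintype.card_subtype,
    Finset.filter_filter]

lemma cnt_compl (n : ℕ) (b : ℕ → Bool) : cnt n b = cnt n (fun i => !(b i)) := by
  refine Nat.card_congr (Equiv.subtypeEquiv (Equiv.mulLeft (Fin.revPerm : Equiv.Perm (Fin n))) ?_)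
  intro π
  constructor
  · intro h i hi
    have h2 := h i hi
    simp only [Equiv.coe_mulLeft, Equiv.Perm.mul_apply, Fin.revPerm_apply]
    rw [Fin.rev_lt_rev]
    have hne : π ⟨i+1, hi⟩ ≠ π ⟨i, Nat.lt_of_succ_lt hi⟩ := by
      intro hc
      have := π.injective hc
      simp only [Fin.mk.injEq] at this
      omega
    constructor
    · intro hlt
      simp only [Bool.not_eq_true']
      by_contra hc
      simp only [Bool.not_eq_false] at hc
      exact absurd (h2.mpr hc) (asymm hlt)
    · intro hb
      simp only [Bool.not_eq_true'] at hb
      rcases lt_or_ge (π ⟨i, Nat.lt_of_succ_lt hi⟩) (π ⟨i+1, hi⟩) with hlt | hle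
      · exact hlt
      · exact absurd (h2.mp (lt_of_le_of_ne hle hne)) (by simp [hb])
  · intro h i hi
    have h2 := h i hi
    simp only [Equiv.coe_mulLeft, Equiv.Perm.mul_apply, Fin.revPerm_apply, Fin.rev_lt_rev,
      Bool.not_eq_true'] at h2
    have hne : π ⟨i+1, hi⟩ ≠ π ⟨i, Nat.lt_of_succ_lt hi⟩ := by
      intro hc
      have := π.injective hc
      simp only [Fin.mk.injEq] at this
      omega
    constructor
    · intro hlt
      by_contra hc
      simp only [Bool.not_eq_true] at hc
      exact absurd (h2.mpr hc) (asymm hlt)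
    · intro hb
      rcases lt_or_ge (π ⟨i+1, hi⟩) (π ⟨i, Nat.lt_of_succ_lt hi⟩) with hlt | hle
      · exact hlt
      · exact absurd (h2.mp (lt_of_le_of_ne hle (Ne.symm hne))) (by simp [hb])

/-! ### Arithmetic properties of `bous` -/

lemma bous_congr : ∀ (m : ℕ) (b c : ℕ → Bool), (∀ i < m, b i = c i) →
    ∀ k, bous m b k = bous m c k := by
  intro m
  induction m with
  | zero => intro b c _ k; rfl
  | succ m IH =>
    intro b c h k
    rw [bous_succ, bous_succ, h 0 (by omega)]
    have hs : ∀ v, bous m (fun i => b (i+1)) v = bous m (fun i => c (i+1)) v :=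
      IH _ _ (fun i hi => h (i+1) (by omega))
    split <;> exact Finset.sum_congr rfl (fun v _ => hs v)

lemma bous_mono {m : ℕ} {b : ℕ → Bool} (hb : b 0 = true) {k k' : ℕ} (h : k ≤ k') :
    bous (m+1) b k ≤ bous (m+1) b k' := by
  rw [bous_succ, bous_succ, if_pos hb, if_pos hb]
  exact Finset.sum_le_sum_of_subset (by
    apply Finset.range_subset_range.mpr
    omega)

lemma bous_anti {m : ℕ} {b : ℕ → Bool} (hb : b 0 = false) {k k' : ℕ} (h : k ≤ k') :
    bous (m+1) b k' ≤ bous (m+1) b k := by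
  rw [bous_succ, bous_succ, if_neg (by simp [hb]), if_neg (by simp [hb])]
  exact Finset.sum_le_sum_of_subset (Finset.Ico_subset_Ico h le_rfl)

lemma bous_zero_left {m : ℕ} {b : ℕ → Bool} (hb : b 0 = true) : bous (m+1) b 0 = 0 := by
  rw [bous_succ, if_pos hb]
  simp

lemma bous_top {m : ℕ} {b : ℕ → Bool} (hb : b 0 = false) {k : ℕ} (h : m+1 ≤ k) :
    bous (m+1) b k = 0 := by
  rw [bous_succ, if_neg (by simp [hb])]
  rw [Finset.Ico_eq_empty (by omega)]
  simp

lemma bous_pos : ∀ (m : ℕ) (b : ℕ → Bool), 0 < ∑ v ∈ range (m+1), bous m b v := by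
  intro m
  induction m with
  | zero => intro b; simp [bous]
  | succ m IH =>
    intro b
    by_cases hb : b 0 = true
    · calc 0 < bous (m+1) b (m+1) := by
            rw [bous_succ, if_pos hb, min_self]
            exact IH _
        _ ≤ _ := Finset.single_le_sum (fun i _ => Nat.zero_le _) (by simp)
    · calc 0 < bous (m+1) b 0 := by
            rw [bous_succ, if_neg hb]
            rw [show Ico 0 (m+1) = range (m+1) from by rw [Finset.range_eq_Ico]]
            exact IH _
        _ ≤ _ := Finset.single_le_sum (fun i _ => Nat.zero_le _) (by simp)

lemma bous_full_true {m : ℕ} {b : ℕ → Bool} (hb : b 0 = true) {k : ℕ} (h : m+1 ≤ k) :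
    bous (m+1) b k = ∑ v ∈ range (m+1), bous m (fun i => b (i+1)) v := by
  rw [bous_succ, if_pos hb, min_eq_right h]

lemma bous_full_false {m : ℕ} {b : ℕ → Bool} (hb : b 0 = false) :
    bous (m+1) b 0 = ∑ v ∈ range (m+1), bous m (fun i => b (i+1)) v := by
  rw [bous_succ, if_neg (by simp [hb]), Finset.range_eq_Ico]

/-! ### The key comparison lemma -/

lemma main_lemma : ∀ (t L : ℕ) (b c : ℕ → Bool),
    (∀ i, i ≤ t → c i = !(b i)) → (∀ i, t < i → c i = b i) → b t = b (t+1) → t + 2 ≤ L →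
    (∀ k, k ≤ L → bous L b k ≤ bous L c (L - k)) ∧
    (∃ k, k ≤ L ∧ bous L b k < bous L c (L - k)) := by
  intro t
  induction t with
  | zero =>
    intro L b c hc1 hc2 hb0 hL
    obtain ⟨M, rfl⟩ : ∃ M, L = M + 1 + 1 := ⟨L - 2, by omega⟩
    have hcs : (fun i => c (i+1)) = (fun i => b (i+1)) := funext fun i => hc2 (i+1) (by omega)
    set g : ℕ → ℕ := bous (M+1) (fun i => b (i+1)) with hg
    by_cases hb : b 0 = true
    · have hb' : b 1 = true := by rw [← hb0]; exact hb
      have hc0 : c 0 = false := by rw [hc1 0 le_rfl, hb]; rfl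
      constructor
      · intro k hk
        rw [bous_succ, if_pos hb, min_eq_left hk]
        rw [bous_succ, if_neg (by simp [hc0]), hcs]
        rw [Finset.sum_Ico_eq_sum_range]
        rw [show (M + 1 + 1) - (M + 1 + 1 - k) = k from by omega]
        apply Finset.sum_le_sum
        intro i _
        exact bous_mono hb' (Nat.le_add_left _ _)
      · refine ⟨1, by omega, ?_⟩
        rw [bous_succ, if_pos hb, show min 1 (M+1+1) = 1 from by omega]
        rw [Finset.sum_range_one, ← hg]
        rw [show g 0 = 0 from bous_zero_left (show (fun i => b (i+1)) 0 = true from hb')]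
        rw [bous_succ, if_neg (by simp [hc0]), hcs]
        rw [show (M + 1 + 1) - 1 = M + 1 from by omega, Nat.Ico_succ_singleton,
          Finset.sum_singleton, ← hg]
        rw [show g (M+1) = ∑ v ∈ range (M+1), bous M (fun i => b (i+1+1)) v from
          bous_full_true hb' le_rfl]
        exact bous_pos M _
    · have hb' : b 1 = false := by rw [← hb0]; simpa using hb
      have hc0 : c 0 = true := by rw [hc1 0 le_rfl]; simp [Bool.not_eq_true] at hb; simp [hb]
      constructor
      · intro k hk
        rw [bous_succ, if_neg (by simp; exact Bool.not_eq_true _ ▸ hb), ← hg]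
        rw [bous_succ, if_pos hc0, hcs, ← hg, min_eq_left (by omega)]
        rw [Finset.sum_Ico_eq_sum_range, show (M + 1 + 1) - k = M + 1 + 1 - k from rfl]
        apply Finset.sum_le_sum
        intro i _
        exact bous_anti hb' (Nat.le_add_left _ _)
      · refine ⟨1, by omega, ?_⟩
        rw [bous_succ, if_neg (by simp; exact Bool.not_eq_true _ ▸ hb), ← hg]
        rw [bous_succ, if_pos hc0, hcs, ← hg]
        rw [show min (M + 1 + 1 - 1) (M+1+1) = M+1 from by omega]
        have e1 : ∑ v ∈ Ico 0 (M+1+1), g v = g 0 + ∑ v ∈ Ico 1 (M+1+1), g v :=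
          Finset.sum_eq_sum_Ico_succ_bot (by omega) g
        have e2 : ∑ v ∈ range (M+1+1), g v = ∑ v ∈ range (M+1), g v + g (M+1) :=
          Finset.sum_range_succ g (M+1)
        have e3 : g (M+1) = 0 := bous_top hb' le_rfl
        have e4 : ∑ v ∈ Ico 0 (M+1+1), g v = ∑ v ∈ range (M+1+1), g v := by
          rw [Finset.range_eq_Ico]
        have e5 : 0 < g 0 := by
          rw [hg, bous_full_false hb']
          exact bous_pos M _
        omega
  | succ t IH =>
    intro L b c hc1 hc2 hb0 hL
    obtain ⟨L', rfl⟩ : ∃ L', L = L' + 1 := ⟨L - 1, by omega⟩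
    have hL' : t + 2 ≤ L' := by omega
    obtain ⟨IH1, v0, hv0, IHlt⟩ :=
      IH L' (fun i => b (i+1)) (fun i => c (i+1))
        (fun i hi => hc1 (i+1) (by omega)) (fun i hi => hc2 (i+1) (by omega)) hb0 hL'
    set g : ℕ → ℕ := bous L' (fun i => b (i+1)) with hg
    set g' : ℕ → ℕ := bous L' (fun i => c (i+1)) with hg'
    have hc0 : c 0 = !(b 0) := hc1 0 (by omega)
    by_cases hb : b 0 = true
    · have hc0' : c 0 = false := by rw [hc0, hb]; rfl
      constructor
      · intro k hk
        rw [bous_succ, if_pos hb, min_eq_left hk, ← hg]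
        rw [bous_succ, if_neg (by simp [hc0']), ← hg']
        rw [Finset.sum_Ico_eq_sum_range]
        rw [show (L' + 1) - (L' + 1 - k) = k from by omega]
        rw [← Finset.sum_range_reflect (fun i => g' (L' + 1 - k + i)) k]
        apply Finset.sum_le_sum
        intro j hj
        simp only [mem_range] at hj
        rw [show L' + 1 - k + (k - 1 - j) = L' - j from by omega]
        exact IH1 j (by omega)
      · refine ⟨L' + 1, le_rfl, ?_⟩
        rw [bous_succ, if_pos hb, min_self, ← hg]
        rw [bous_succ, if_neg (by simp [hc0']), ← hg']
        rw [Nat.sub_self, show Ico 0 (L'+1) = range (L'+1) from by rw [Finset.range_eq_Ico]]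
        rw [← Finset.sum_range_reflect g' (L'+1)]
        apply Finset.sum_lt_sum
        · intro j hj
          simp only [mem_range] at hj
          rw [show L' + 1 - 1 - j = L' - j from by omega]
          exact IH1 j (by omega)
        · refine ⟨v0, by simp only [mem_range]; omega, ?_⟩
          rw [show L' + 1 - 1 - v0 = L' - v0 from by omega]
          exact IHlt
    · have hbf : b 0 = false := by simpa using hb
      have hc0' : c 0 = true := by rw [hc0, hbf]; rfl
      constructor
      · intro k hk
        rw [bous_succ, if_neg (by simp [hbf]), ← hg]
        rw [bous_succ, if_pos hc0', min_eq_left (by omega), ← hg']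
        rw [Finset.sum_Ico_eq_sum_range]
        rw [← Finset.sum_range_reflect g' (L' + 1 - k)]
        apply Finset.sum_le_sum
        intro j hj
        simp only [mem_range] at hj
        rw [show L' + 1 - k - 1 - j = L' - (k + j) from by omega]
        exact IH1 (k + j) (by omega)
      · refine ⟨0, by omega, ?_⟩
        rw [bous_succ, if_neg (by simp [hbf]), ← hg]
        rw [bous_succ, if_pos hc0', Nat.sub_zero, min_self, ← hg']
        rw [show Ico 0 (L'+1) = range (L'+1) from by rw [Finset.range_eq_Ico]]
        rw [← Finset.sum_range_reflect g' (L'+1)]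
        apply Finset.sum_lt_sum
        · intro j hj
          simp only [mem_range] at hj
          rw [show L' + 1 - 1 - j = L' - j from by omega]
          exact IH1 j (by omega)
        · refine ⟨v0, by simp only [mem_range]; omega, ?_⟩
          rw [show L' + 1 - 1 - v0 = L' - v0 from by omega]
          exact IHlt

/-! ### Chains of word flips -/

def SB (L : ℕ) (b : ℕ → Bool) : ℕ := ∑ k ∈ range (L+1), bous L b k

def CH (l : ℕ) (b : ℕ → Bool) : Finset ℕ := (range l).filter (fun t => b t ≠ b (t+1))

lemma SB_eq_cnt (L : ℕ) (b : ℕ → Bool) : SB L b = cnt (L+1) b := (cnt_eq L b).symm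

lemma main_sum (t L : ℕ) (b c : ℕ → Bool)
    (h1 : ∀ i, i ≤ t → c i = !(b i)) (h2 : ∀ i, t < i → c i = b i)
    (h3 : b t = b (t+1)) (h4 : t + 2 ≤ L) : SB L b < SB L c := by
  obtain ⟨mle, k0, hk0, hlt⟩ := main_lemma t L b c h1 h2 h3 h4
  have hrefl : SB L c = ∑ k ∈ range (L+1), bous L c (L + 1 - 1 - k) :=
    (Finset.sum_range_reflect (bous L c) (L+1)).symm
  rw [SB, hrefl]
  apply Finset.sum_lt_sum
  · intro i hi
    simp only [mem_range] at hi
    rw [show L + 1 - 1 - i = L - i from by omega]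
    exact mle i (by omega)
  · refine ⟨k0, by simp only [mem_range]; omega, ?_⟩
    rw [show L + 1 - 1 - k0 = L - k0 from by omega]
    exact hlt

lemma eq_of_CH_eq (L : ℕ) (hL : 1 ≤ L) (b c : ℕ → Bool)
    (h : CH (L-1) b = CH (L-1) c) : SB L b = SB L c := by
  have key : ∀ i, i < L - 1 → ((b i ≠ b (i+1)) ↔ (c i ≠ c (i+1))) := by
    intro i hi
    constructor
    · intro hne
      have : i ∈ CH (L-1) b := by simp [CH, mem_filter, mem_range, hi, hne]
      rw [h] at this
      exact (Finset.mem_filter.mp this).2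
    · intro hne
      have : i ∈ CH (L-1) c := by simp [CH, mem_filter, mem_range, hi, hne]
      rw [← h] at this
      exact (Finset.mem_filter.mp this).2
  by_cases hbc : b 0 = c 0
  · have heq : ∀ i, i < L → b i = c i := by
      intro i
      induction i with
      | zero => intro _; exact hbc
      | succ i IHi =>
        intro hi
        have hb := IHi (by omega)
        have hk := key i (by omega)
        cases hci : c i <;> cases hci1 : c (i+1) <;> cases hbi1 : b (i+1) <;> simp_all
    exact Finset.sum_congr rfl (fun k _ => bous_congr L b c heq k)
  · have hbc' : b 0 = !(c 0) := by
      cases hb0 : b 0 <;> cases hc0 : c 0 <;> simp_all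
    have heq : ∀ i, i < L → b i = !(c i) := by
      intro i
      induction i with
      | zero => intro _; exact hbc'
      | succ i IHi =>
        intro hi
        have hb := IHi (by omega)
        have hk := key i (by omega)
        cases hci : c i <;> cases hci1 : c (i+1) <;> cases hbi1 : b (i+1) <;> simp_all
    have e1 : SB L b = SB L (fun i => !(c i)) :=
      Finset.sum_congr rfl (fun k _ => bous_congr L b _ heq k)
    rw [e1, SB_eq_cnt, SB_eq_cnt, ← cnt_compl]

lemma flip_CH (L t : ℕ) (b : ℕ → Bool) (htr : t < L - 1) (hbt : b t = b (t+1)) :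
    CH (L-1) (fun i => if i ≤ t then !(b i) else b i) = insert t (CH (L-1) b) := by
  ext s
  simp only [CH, mem_insert, mem_filter, mem_range]
  rcases lt_trichotomy s t with hst | hst | hst
  · have h1 : s ≤ t := by omega
    have h2 : s + 1 ≤ t := by omega
    have e1 : (if s ≤ t then !(b s) else b s) = !(b s) := if_pos h1
    have e2 : (if s + 1 ≤ t then !(b (s+1)) else b (s+1)) = !(b (s+1)) := if_pos h2
    rw [e1, e2]
    constructor
    · rintro ⟨hs1, hs2⟩
      exact Or.inr ⟨hs1, by simpa using hs2⟩
    · rintro (rfl | ⟨hs1, hs2⟩)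
      · omega
      · exact ⟨hs1, by simpa using hs2⟩
  · subst hst
    have h2 : ¬ (s + 1 ≤ s) := by omega
    have e1 : (if s ≤ s then !(b s) else b s) = !(b s) := if_pos le_rfl
    have e2 : (if s + 1 ≤ s then !(b (s+1)) else b (s+1)) = b (s+1) := if_neg h2
    rw [e1, e2, ← hbt]
    simp [htr]
  · have h1 : ¬ (s ≤ t) := by omega
    have h2 : ¬ (s + 1 ≤ t) := by omega
    have e1 : (if s ≤ t then !(b s) else b s) = b s := if_neg h1
    have e2 : (if s + 1 ≤ t then !(b (s+1)) else b (s+1)) = b (s+1) := if_neg h2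
    rw [e1, e2]
    constructor
    · rintro ⟨hs1, hs2⟩
      exact Or.inr ⟨hs1, hs2⟩
    · rintro (rfl | ⟨hs1, hs2⟩)
      · omega
      · exact ⟨hs1, hs2⟩

lemma flip_SB (L t : ℕ) (hL : 1 ≤ L) (b : ℕ → Bool) (htr : t < L - 1) (hbt : b t = b (t+1)) :
    SB L b < SB L (fun i => if i ≤ t then !(b i) else b i) := by
  apply main_sum t L b _
  · intro i hi
    simp only [if_pos hi]
  · intro i hi
    have : ¬ (i ≤ t) := by omega
    simp only [if_neg this]
  · exact hbt
  · omega

lemma chain (L : ℕ) (hL : 1 ≤ L) : ∀ (d : ℕ) (b c : ℕ → Bool),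
    CH (L-1) b ⊆ CH (L-1) c → (CH (L-1) c \ CH (L-1) b).card = d + 1 → SB L b < SB L c := by
  intro d
  induction d with
  | zero =>
    intro b c hsub hcard
    obtain ⟨t, ht⟩ := Finset.card_pos.mp (by omega : 0 < (CH (L-1) c \ CH (L-1) b).card)
    have ht1 : t ∈ CH (L-1) c := (Finset.mem_sdiff.mp ht).1
    have ht2 : t ∉ CH (L-1) b := (Finset.mem_sdiff.mp ht).2
    have htr : t < L - 1 := by
      have := (Finset.mem_filter.mp ht1).1
      simpa [mem_range] using this
    have hbt : b t = b (t+1) := by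
      by_contra hc
      exact ht2 (by simp [CH, mem_filter, mem_range, htr, hc])
    have step1 := flip_SB L t hL b htr hbt
    have hCH1 := flip_CH L t b htr hbt
    have hsing : CH (L-1) c \ CH (L-1) b = {t} := by
      obtain ⟨a, ha⟩ := Finset.card_eq_one.mp hcard
      rw [ha] at ht ⊢
      simp only [Finset.mem_singleton] at ht
      rw [ht]
    have hCHeq : CH (L-1) (fun i => if i ≤ t then !(b i) else b i) = CH (L-1) c := by
      rw [hCH1]
      apply Finset.Subset.antisymm
      · intro s hs
        rcases Finset.mem_insert.mp hs with rfl | hs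
        · exact ht1
        · exact hsub hs
      · intro s hs
        by_cases hsb : s ∈ CH (L-1) b
        · exact Finset.mem_insert_of_mem hsb
        · have : s ∈ CH (L-1) c \ CH (L-1) b := Finset.mem_sdiff.mpr ⟨hs, hsb⟩
          rw [hsing] at this
          simp only [Finset.mem_singleton] at this
          rw [this]
          exact Finset.mem_insert_self _ _
    rw [← eq_of_CH_eq L hL _ c hCHeq]
    exact step1
  | succ d IHd =>
    intro b c hsub hcard
    obtain ⟨t, ht⟩ := Finset.card_pos.mp (by omega : 0 < (CH (L-1) c \ CH (L-1) b).card)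
    have ht1 : t ∈ CH (L-1) c := (Finset.mem_sdiff.mp ht).1
    have ht2 : t ∉ CH (L-1) b := (Finset.mem_sdiff.mp ht).2
    have htr : t < L - 1 := by
      have := (Finset.mem_filter.mp ht1).1
      simpa [mem_range] using this
    have hbt : b t = b (t+1) := by
      by_contra hc
      exact ht2 (by simp [CH, mem_filter, mem_range, htr, hc])
    have step1 := flip_SB L t hL b htr hbt
    have hCH1 := flip_CH L t b htr hbt
    have hsub1 : CH (L-1) (fun i => if i ≤ t then !(b i) else b i) ⊆ CH (L-1) c := by
      rw [hCH1]
      intro s hs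
      rcases Finset.mem_insert.mp hs with rfl | hs
      · exact ht1
      · exact hsub hs
    have hcard1 : (CH (L-1) c \ CH (L-1) (fun i => if i ≤ t then !(b i) else b i)).card = d + 1 := by
      rw [hCH1, Finset.sdiff_insert]
      rw [Finset.card_erase_of_mem ht]
      omega
    exact lt_trans step1 (IHd _ c hsub1 hcard1)

/-! ### Final assembly -/

/-- `descSetCount n S` is the number of permutations `π` of `{1,…,n}` (modeled as `Fin n`,
zero-based) whose descent set is exactly `S`, i.e. for every `1 ≤ i ≤ n-1`,
`π(i) > π(i+1)` iff `i ∈ S`. -/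
noncomputable def descSetCount (n : ℕ) (S : Finset ℕ) : ℕ :=
  Nat.card {π : Equiv.Perm (Fin n) //
    ∀ i : ℕ, ∀ h : i + 1 < n,
      (π ⟨i + 1, h⟩ < π ⟨i, Nat.lt_of_succ_lt h⟩ ↔ (i + 1) ∈ S)}

/-- The alternation set of `S ⊆ {1,…,n-1}`: those `i ∈ {1,…,n-2}` such that exactly one of
`i` and `i + 1` belongs to `S`. -/
def altSet (n : ℕ) (S : Finset ℕ) : Finset ℕ :=
  (Finset.Icc 1 (n - 2)).filter (fun i => (i ∈ S ∧ i + 1 ∉ S) ∨ (i ∉ S ∧ i + 1 ∈ S))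

lemma descSetCount_eq_cnt (n : ℕ) (S : Finset ℕ) :
    descSetCount n S = cnt n (fun i => decide ((i+1) ∈ S)) := by
  refine Nat.card_congr (Equiv.subtypeEquivRight fun π => ?_)
  unfold wrd
  simp only [decide_eq_true_eq]

lemma altSet_eq (m : ℕ) (U : Finset ℕ) :
    altSet (m+2) U = (CH m (fun i => decide ((i+1) ∈ U))).image (· + 1) := by
  ext i
  simp only [altSet, CH, Finset.mem_image, mem_filter, mem_range, mem_Icc, ne_eq,
    decide_eq_decide]
  constructor
  · rintro ⟨⟨hi1, hi2⟩, hor⟩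
    refine ⟨i - 1, ⟨by omega, ?_⟩, by omega⟩
    rw [show i - 1 + 1 = i from by omega]
    tauto
  · rintro ⟨a, ⟨ha, hne⟩, rfl⟩
    refine ⟨⟨by omega, by omega⟩, ?_⟩
    tauto

theorem stmt17 (n : ℕ) (hn : 2 ≤ n) (S T : Finset ℕ)
    (hS : S ⊆ Finset.Icc 1 (n - 1)) (hT : T ⊆ Finset.Icc 1 (n - 1))
    (hAlt : altSet n S ⊂ altSet n T) :
    descSetCount n S < descSetCount n T := by
  obtain ⟨m, rfl⟩ : ∃ m, n = m + 2 := ⟨n - 2, by omega⟩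
  set bS : ℕ → Bool := fun i => decide ((i+1) ∈ S) with hbS
  set bT : ℕ → Bool := fun i => decide ((i+1) ∈ T) with hbT
  rw [altSet_eq, altSet_eq] at hAlt
  have hinj : Function.Injective (· + 1 : ℕ → ℕ) := add_left_injective 1
  have hsub : CH m bS ⊆ CH m bT := (Finset.image_subset_image_iff hinj).mp hAlt.1
  have hnsub : ¬ (CH m bT ⊆ CH m bS) := fun h =>
    hAlt.2 ((Finset.image_subset_image_iff hinj).mpr h)
  have hne : (CH m bT \ CH m bS).Nonempty := Finset.sdiff_nonempty.mpr hnsub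
  have hd : 1 ≤ (CH m bT \ CH m bS).card := Finset.card_pos.mpr hne
  have hchain := chain (m+1) (by omega) ((CH m bT \ CH m bS).card - 1) bS bT hsub
    (show (CH m bT \ CH m bS).card = (CH m bT \ CH m bS).card - 1 + 1 by omega)
  rw [descSetCount_eq_cnt, descSetCount_eq_cnt]
  calc cnt (m+2) bS = SB (m+1) bS := (SB_eq_cnt (m+1) bS).symm
    _ < SB (m+1) bT := hchain
    _ = cnt (m+2) bT := SB_eq_cnt (m+1) bT
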